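/- For parking functions f and g, Park(f × g) = Park(f) × Park(g), and for a parking function f of length n and any permutation γ ∈ S_n, Park(f ∘ γ) = Park(f) ∘ γ. -/
import Mathlib


/-- `Park` of a nondecreasing function (0-indexed values). -/
def parkMono (g : ℕ → ℕ) : ℕ → ℕ
  | 0 => 0
  | j + 1 => min (parkMono g j + (g (j + 1) - g j)) (j + 1)

/-- Extension of `f : Fin n → Fin n` to an ℕ-valued function. -/
def extVal {n : ℕ} (f : Fin n → Fin n) : ℕ → ℕ :=
  fun k => if h : k < n then (f ⟨k, h⟩ : ℕ) else 0

/-- Concatenation `f × g`. -/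
def concatF {n m : ℕ} (f : Fin n → Fin n) (g : Fin m → Fin m) :
    Fin (n + m) → Fin (n + m) := fun i =>
  if h : (i : ℕ) < n then
    ⟨(f ⟨i, h⟩ : ℕ), Nat.lt_of_lt_of_le (f ⟨i, h⟩).isLt (Nat.le_add_right n m)⟩
  else
    ⟨n + (g ⟨(i : ℕ) - n, by have := i.isLt; omega⟩ : ℕ),
      Nat.add_lt_add_left (g ⟨(i : ℕ) - n, by have := i.isLt; omega⟩).isLt n⟩

lemma parkMono_le (g : ℕ → ℕ) : ∀ j, parkMono g j ≤ j
  | 0 => le_refl _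
  | j + 1 => min_le_right _ _

lemma le_parkMono (g : ℕ → ℕ) (h0 : g 0 = 0) (hle : ∀ j, g j ≤ j) :
    ∀ j, g j ≤ parkMono g j
  | 0 => by simp [parkMono, h0]
  | j + 1 => by
    have ih := le_parkMono g h0 hle j
    have := hle (j + 1)
    simp only [parkMono]
    omega

lemma parkMono_agree (g g' : ℕ → ℕ) : ∀ j, (∀ k, k ≤ j → g k = g' k) →
    parkMono g j = parkMono g' j
  | 0, _ => rfl
  | j + 1, h => by
    have ih := parkMono_agree g g' j (fun k hk => h k (by omega))
    simp only [parkMono, ih, h j (by omega), h (j+1) (le_refl _)]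

lemma parkMono_const (g : ℕ → ℕ) (a : ℕ) : ∀ b, a ≤ b →
    (∀ j, a ≤ j → j ≤ b → g j = g a) → parkMono g b = parkMono g a
  | 0, hab, _ => by
    have : a = 0 := by omega
    subst this; rfl
  | b + 1, hab, hc => by
    rcases Nat.lt_or_ge a (b+1) with h | h
    · have ih := parkMono_const g a b (by omega) (fun j h1 h2 => hc j h1 (by omega))
      have h1 : g (b+1) = g a := hc (b+1) (by omega) (le_refl _)
      have h2 : g b = g a := hc b (by omega) (by omega)
      have := parkMono_le g b
      simp only [parkMono, h1, h2, ih]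
      omega
    · have : a = b + 1 := by omega
      subst this; rfl

lemma park_welldef {N : ℕ} (pm qm : Fin N → Fin N) (hp : Monotone pm) (hq : Monotone qm)
    (ps qs : Equiv.Perm (Fin N)) (heq : pm ∘ ps = qm ∘ qs) (i : Fin N) :
    parkMono (extVal pm) (ps i) = parkMono (extVal qm) (qs i) := by
  have hpq : pm = qm := by
    have h1 : qm ∘ (ps.symm.trans qs : Equiv.Perm (Fin N)) = pm := by
      funext x
      have := congrFun heq (ps.symm x)
      simpa using this.symm
    have h2 : qm ∘ (ps.symm.trans qs : Equiv.Perm (Fin N)) =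
        qm ∘ (Equiv.refl (Fin N) : Equiv.Perm (Fin N)) :=
      Tuple.unique_monotone (h1 ▸ hp) (by simpa using hq)
    rw [h1] at h2; simpa using h2
  subst hpq
  have hval : pm (ps i) = pm (qs i) := congrFun heq i
  -- show parkMono (extVal pm) is constant between the two positions
  have key : ∀ a b : Fin N, a ≤ b → pm a = pm b →
      parkMono (extVal pm) b = parkMono (extVal pm) a := by
    intro a b hab hv
    refine parkMono_const _ _ _ hab ?_
    intro j h1 h2
    have hjN : j < N := lt_of_le_of_lt h2 b.isLt
    have e1 : extVal pm j = (pm ⟨j, hjN⟩ : ℕ) := dif_pos hjN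
    have e2 : extVal pm (a : ℕ) = (pm a : ℕ) := by
      rw [extVal, dif_pos a.isLt]
    rw [e1, e2]
    have l1 : pm a ≤ pm ⟨j, hjN⟩ := hp (by simpa [Fin.le_def] using h1)
    have l2 : pm ⟨j, hjN⟩ ≤ pm b := hp (by simpa [Fin.le_def] using h2)
    rw [hv] at l1
    have : pm ⟨j, hjN⟩ = pm b := le_antisymm l2 l1
    rw [this, ← hv]
  rcases le_total (ps i) (qs i) with h | h
  · exact (key _ _ h hval).symm
  · exact key _ _ h hval.symm

lemma extVal_concat_lt {n m : ℕ} (fm : Fin n → Fin n) (gm : Fin m → Fin m)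
    {k : ℕ} (hk : k < n) : extVal (concatF fm gm) k = extVal fm k := by
  have h2 : k < n + m := by omega
  simp [extVal, concatF, hk, h2]

lemma extVal_concat_ge {n m : ℕ} (fm : Fin n → Fin n) (gm : Fin m → Fin m)
    {k : ℕ} (hk : k < m) : extVal (concatF fm gm) (n + k) = n + extVal gm k := by
  have h2 : n + k < n + m := by omega
  have h3 : ¬ (n + k < n) := by omega
  simp [extVal, concatF, h2, h3, hk]

lemma parkMono_concat_lt {n m : ℕ} (fm : Fin n → Fin n) (gm : Fin m → Fin m)
    {j : ℕ} (hj : j < n) :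
    parkMono (extVal (concatF fm gm)) j = parkMono (extVal fm) j := by
  apply parkMono_agree
  intro k hk
  exact extVal_concat_lt fm gm (lt_of_le_of_lt hk hj)

lemma parkMono_concat_ge {n m : ℕ} (fm : Fin n → Fin n) (gm : Fin m → Fin m)
    (hfm : Monotone fm) (hfm' : ∀ i : Fin n, (fm i : ℕ) ≤ (i : ℕ))
    (hgm : Monotone gm) (hgm' : ∀ i : Fin m, (gm i : ℕ) ≤ (i : ℕ)) :
    ∀ k, k < m →
      parkMono (extVal (concatF fm gm)) (n + k) = n + parkMono (extVal gm) k := by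
  have hfle : ∀ j, extVal fm j ≤ j := by
    intro j
    unfold extVal
    split
    · exact hfm' _
    · exact Nat.zero_le _
  intro k hk
  induction k with
  | zero =>
    -- parkMono at position n equals n (since extVal gm 0 = 0 forces parkMono gm 0 = 0)
    have hg0 : parkMono (extVal gm) 0 = 0 := rfl
    rw [hg0]
    cases n with
    | zero => rfl
    | succ n' =>
      have hn' : n' < n' + 1 := Nat.lt_succ_self _
      have e1 : extVal (concatF fm gm) n' = extVal fm n' := extVal_concat_lt fm gm hn'
      have e2 : extVal (concatF fm gm) (n' + 1) = n' + 1 := by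
        have e2' := extVal_concat_ge fm gm (k := 0) hk
        simp only [Nat.add_zero] at e2'
        have hg : (gm ⟨0, hk⟩ : ℕ) ≤ 0 := hgm' ⟨0, hk⟩
        have : extVal gm 0 = 0 := by
          unfold extVal
          rw [dif_pos hk]
          omega
        omega
      have e3 : parkMono (extVal (concatF fm gm)) n' = parkMono (extVal fm) n' :=
        parkMono_concat_lt fm gm hn'
      have h0 : extVal fm 0 = 0 := by
        have hf : (fm ⟨0, Nat.succ_pos n'⟩ : ℕ) ≤ 0 := hfm' ⟨0, Nat.succ_pos n'⟩
        unfold extVal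
        rw [dif_pos (Nat.succ_pos n')]
        omega
      have l1 : extVal fm n' ≤ parkMono (extVal fm) n' := le_parkMono _ h0 hfle n'
      have l2 : parkMono (extVal fm) n' ≤ n' := parkMono_le _ n'
      show min (parkMono (extVal (concatF fm gm)) n' +
          (extVal (concatF fm gm) (n' + 1) - extVal (concatF fm gm) n')) (n' + 1) =
        n' + 1 + 0
      rw [e1, e2, e3]
      omega
  | succ k ih =>
    have ih' := ih (by omega)
    have e1 : extVal (concatF fm gm) (n + k) = n + extVal gm k :=
      extVal_concat_ge fm gm (by omega)
    have e2 : extVal (concatF fm gm) (n + (k + 1)) = n + extVal gm (k + 1) :=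
      extVal_concat_ge fm gm hk
    have hpg : parkMono (extVal gm) k ≤ k := parkMono_le _ k
    have hnk : n + (k + 1) = (n + k) + 1 := rfl
    show min (parkMono (extVal (concatF fm gm)) (n + k) +
        (extVal (concatF fm gm) (n + k + 1) - extVal (concatF fm gm) (n + k))) (n + k + 1) =
      n + parkMono (extVal gm) (k + 1)
    have e2' : extVal (concatF fm gm) (n + k + 1) = n + extVal gm (k + 1) := by
      rw [← hnk]; exact e2
    rw [e1, e2', ih']
    show _ = n + min (parkMono (extVal gm) k + (extVal gm (k + 1) - extVal gm k)) (k + 1)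
    omega


/-- `Park(f × g) = Park(f) × Park(g)` and `Park(f ∘ γ) = Park(f) ∘ γ`.
`Park` of a parking function `f = f↑ ∘ σ` (nondecreasing `f↑` with `f↑(i) ≤ i`,
`σ` a permutation) is `Park(f↑) ∘ σ`, stated here for arbitrary such decompositions. -/
theorem park_concat_and_park_comp (n m : ℕ)
    (f : Fin n → Fin n) (g : Fin m → Fin m)
    (fm : Fin n → Fin n) (fσ : Equiv.Perm (Fin n))
    (gm : Fin m → Fin m) (gσ : Equiv.Perm (Fin m))
    (hm : Fin (n + m) → Fin (n + m)) (hσ : Equiv.Perm (Fin (n + m)))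
    (γ : Equiv.Perm (Fin n))
    (km : Fin n → Fin n) (kσ : Equiv.Perm (Fin n))
    (hfm : Monotone fm) (hfm' : ∀ i : Fin n, (fm i : ℕ) ≤ (i : ℕ)) (hf : f = fm ∘ fσ)
    (hgm : Monotone gm) (hgm' : ∀ i : Fin m, (gm i : ℕ) ≤ (i : ℕ)) (hg : g = gm ∘ gσ)
    (hhm : Monotone hm) (hhm' : ∀ i : Fin (n + m), (hm i : ℕ) ≤ (i : ℕ))
    (hh : concatF f g = hm ∘ hσ)
    (hkm : Monotone km) (hkm' : ∀ i : Fin n, (km i : ℕ) ≤ (i : ℕ))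
    (hk : f ∘ γ = km ∘ kσ) :
    (∀ i : Fin (n + m),
      parkMono (extVal hm) (hσ i) =
        if h : (i : ℕ) < n then parkMono (extVal fm) (fσ ⟨i, h⟩)
        else n + parkMono (extVal gm) (gσ ⟨(i : ℕ) - n, by have := i.isLt; omega⟩)) ∧
    (∀ i : Fin n, parkMono (extVal km) (kσ i) = parkMono (extVal fm) (fσ (γ i))) := by
  constructor
  · -- concatenation part
    set cm : Fin (n + m) → Fin (n + m) := concatF fm gm with hcm
    have hcm_mono : Monotone cm := by
      intro a b hab
      rw [Fin.le_def] at hab ⊢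
      unfold cm
      unfold concatF
      by_cases ha : (a : ℕ) < n <;> by_cases hb : (b : ℕ) < n
      · rw [dif_pos ha, dif_pos hb]
        exact hfm (show (⟨a, ha⟩ : Fin n) ≤ ⟨b, hb⟩ from hab)
      · rw [dif_pos ha, dif_neg hb]
        have := (fm ⟨a, ha⟩).isLt
        simp only []
        omega
      · omega
      · rw [dif_neg ha, dif_neg hb]
        simp only []
        have : gm ⟨(a : ℕ) - n, by have := a.isLt; omega⟩ ≤
            gm ⟨(b : ℕ) - n, by have := b.isLt; omega⟩ :=
          hgm (show ((a : ℕ) - n) ≤ ((b : ℕ) - n) by omega)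
        omega
    set cσ : Equiv.Perm (Fin (n + m)) :=
      (finSumFinEquiv.symm.trans (Equiv.sumCongr fσ gσ)).trans finSumFinEquiv with hcσ
    have cσ_lt : ∀ (i : Fin (n + m)) (h : (i : ℕ) < n),
        cσ i = Fin.castAdd m (fσ ⟨i, h⟩) := by
      intro i h
      have : i = Fin.castAdd m ⟨i, h⟩ := by ext; rfl
      rw [hcσ]
      conv_lhs => rw [this]
      rw [Equiv.trans_apply, Equiv.trans_apply, finSumFinEquiv_symm_apply_castAdd,
        Equiv.sumCongr_apply, Sum.map_inl, finSumFinEquiv_apply_left]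
    have cσ_ge : ∀ (i : Fin (n + m)) (h : ¬ (i : ℕ) < n),
        cσ i = Fin.natAdd n (gσ ⟨(i : ℕ) - n, by have := i.isLt; omega⟩) := by
      intro i h
      have : i = Fin.natAdd n ⟨(i : ℕ) - n, by have := i.isLt; omega⟩ := by
        ext; simp; omega
      rw [hcσ]
      conv_lhs => rw [this]
      rw [Equiv.trans_apply, Equiv.trans_apply, finSumFinEquiv_symm_apply_natAdd,
        Equiv.sumCongr_apply, Sum.map_inr, finSumFinEquiv_apply_right]
    have heq : concatF f g = cm ∘ cσ := by
      funext i
      by_cases h : (i : ℕ) < n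
      · rw [Function.comp_apply, cσ_lt i h]
        ext
        have hlt : ((Fin.castAdd m (fσ ⟨i, h⟩) : Fin (n + m)) : ℕ) < n := by
          simp [(fσ ⟨i, h⟩).isLt]
        unfold cm
        unfold concatF
        rw [dif_pos h, dif_pos hlt]
        simp [hf]
      · rw [Function.comp_apply, cσ_ge i h]
        ext
        have hge : ¬ ((Fin.natAdd n (gσ ⟨(i : ℕ) - n, by have := i.isLt; omega⟩)
            : Fin (n + m)) : ℕ) < n := by simp
        unfold cm
        unfold concatF
        rw [dif_neg h, dif_neg hge]
        simp [hg]
    intro i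
    have hwd := park_welldef hm cm hhm hcm_mono hσ cσ (hh.symm.trans heq) i
    rw [hwd]
    by_cases h : (i : ℕ) < n
    · rw [dif_pos h, cσ_lt i h]
      have : ((Fin.castAdd m (fσ ⟨i, h⟩) : Fin (n + m)) : ℕ) = ((fσ ⟨i, h⟩ : Fin n) : ℕ) :=
        rfl
      rw [this]
      exact parkMono_concat_lt fm gm (fσ ⟨i, h⟩).isLt
    · rw [dif_neg h, cσ_ge i h]
      have : ((Fin.natAdd n (gσ ⟨(i : ℕ) - n, by have := i.isLt; omega⟩)
          : Fin (n + m)) : ℕ) = n + ((gσ ⟨(i : ℕ) - n, by have := i.isLt; omega⟩ : Fin m) : ℕ) :=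
        rfl
      rw [this]
      exact parkMono_concat_ge fm gm hfm hfm' hgm hgm' _ (Fin.isLt _)
  · -- composition part
    intro i
    have heq2 : km ∘ kσ = fm ∘ (γ.trans fσ : Equiv.Perm (Fin n)) := by
      funext x
      have h1 := congrFun hk x
      have h2 := congrFun hf (γ x)
      simp only [Function.comp_apply] at h1 h2 ⊢
      rw [← h1, h2]
      rfl
    exact park_welldef km fm hkm hfm kσ (γ.trans fσ) heq2 i
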